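/- arXiv:1704.07104 — 2 statements merged into one kernel-verified Lean document; each statement's English description precedes it below -/
import Mathlib

section
/- The number of permutations of length n ≥ 1 avoiding both 231 and the mesh pattern (1, {⟨0,0⟩,⟨0,1⟩,⟨1,1⟩}) equals C_n − C_{n−1}, where C_n is the n-th Catalan number. Equivalently, the generating function is 1 + x·C(x)·(C(x)−1) where C(x) = 1 + x·C(x)². -/
def extFun {k n : ℕ} (α : Fin k → Fin n) : ℕ → ℕ := fun i =>
  if h0 : i = 0 then 0
  else if h1 : i ≤ k then ((α ⟨i - 1, by omega⟩ : Fin n) : ℕ) + 1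
  else n + 1

/-- An occurrence of the mesh pattern `(τ, R)` in `π` given by index/value
injections `α`, `β` (using 1-indexed coordinates for the regions). -/
def MeshOcc {k n : ℕ} (τ : Equiv.Perm (Fin k)) (R : Finset (ℕ × ℕ))
    (π : Equiv.Perm (Fin n)) (α β : Fin k → Fin n) : Prop :=
  StrictMono α ∧ StrictMono β ∧ (∀ i, π (α i) = β (τ i)) ∧
    ∀ p ∈ R, ∀ x : Fin n,
      ¬(extFun α p.1 < (x : ℕ) + 1 ∧ (x : ℕ) + 1 < extFun α (p.1 + 1) ∧
        extFun β p.2 < (π x : ℕ) + 1 ∧ (π x : ℕ) + 1 < extFun β (p.2 + 1))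

def ContainsMesh {k n : ℕ} (τ : Equiv.Perm (Fin k)) (R : Finset (ℕ × ℕ))
    (π : Equiv.Perm (Fin n)) : Prop :=
  ∃ α β : Fin k → Fin n, MeshOcc τ R π α β

def AvoidsMesh {k n : ℕ} (τ : Equiv.Perm (Fin k)) (R : Finset (ℕ × ℕ))
    (π : Equiv.Perm (Fin n)) : Prop :=
  ¬ ContainsMesh τ R π

/-- `π` avoids the classical pattern 231. -/
def Avoids231 {n : ℕ} (π : Equiv.Perm (Fin n)) : Prop :=
  ¬ ∃ i j k : Fin n, i < j ∧ j < k ∧ π k < π i ∧ π i < π j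

namespace Av231

open Equiv Finset

/-! ### The glue construction -/

section Glue

variable {n p : ℕ}

/-- Glue function: positions `[0,p)` get values `σ` (low block), position `p` gets
max `n`, positions `[p+1, n]` get values `p + ρ`. -/
def gf (n p : ℕ) (hp : p ≤ n) (σ : Perm (Fin p)) (ρ : Perm (Fin (n - p)))
    (i : Fin (n + 1)) : Fin (n + 1) :=
  if h : (i : ℕ) < p then ⟨σ ⟨i, h⟩, by have := (σ ⟨i, h⟩).isLt; omega⟩
  else if h2 : (i : ℕ) = p then ⟨n, Nat.lt_succ_self n⟩
  else ⟨p + (ρ ⟨i - (p + 1), by have := i.isLt; omega⟩ : ℕ),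
    by have := (ρ ⟨i - (p + 1), by have := i.isLt; omega⟩).isLt; omega⟩

variable {hp : p ≤ n} {σ : Perm (Fin p)} {ρ : Perm (Fin (n - p))}

lemma gf_lt {i : Fin (n + 1)} (h : (i : ℕ) < p) :
    (gf n p hp σ ρ i : ℕ) = σ ⟨i, h⟩ := by
  simp only [gf, dif_pos h]

lemma gf_eq {i : Fin (n + 1)} (h : (i : ℕ) = p) :
    (gf n p hp σ ρ i : ℕ) = n := by
  simp only [gf, dif_neg (by omega : ¬ (i : ℕ) < p), dif_pos h]

lemma gf_gt {i : Fin (n + 1)} (h : p < (i : ℕ)) :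
    (gf n p hp σ ρ i : ℕ) = p + ρ ⟨i - (p + 1), by have := i.isLt; omega⟩ := by
  simp only [gf, dif_neg (by omega : ¬ (i : ℕ) < p), dif_neg (by omega : ¬ (i : ℕ) = p)]

lemma gf_gt' {i : Fin (n + 1)} (h : p < (i : ℕ)) (a : Fin (n - p))
    (ha : (a : ℕ) = (i : ℕ) - (p + 1)) : (gf n p hp σ ρ i : ℕ) = p + ρ a := by
  rw [gf_gt h]
  congr 1
  exact congrArg (fun t : Fin (n - p) => ((ρ t : Fin (n - p)) : ℕ)) (Fin.ext ha.symm)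

lemma gf_inj : Function.Injective (gf n p hp σ ρ) := by
  intro i j hij
  have hv : (gf n p hp σ ρ i : ℕ) = gf n p hp σ ρ j := congrArg Fin.val hij
  have hi := i.isLt; have hj := j.isLt
  rw [Fin.ext_iff]
  rcases lt_trichotomy (i : ℕ) p with h1 | h1 | h1 <;>
    rcases lt_trichotomy (j : ℕ) p with h2 | h2 | h2
  · rw [gf_lt h1, gf_lt h2] at hv
    have : (⟨i, h1⟩ : Fin p) = ⟨j, h2⟩ := σ.injective (Fin.ext hv)
    simp only [Fin.mk.injEq] at this
    exact this
  · rw [gf_lt h1, gf_eq h2] at hv; have := (σ ⟨i, h1⟩).isLt; omega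
  · rw [gf_lt h1, gf_gt h2] at hv; have := (σ ⟨i, h1⟩).isLt; omega
  · rw [gf_eq h1, gf_lt h2] at hv; have := (σ ⟨j, h2⟩).isLt; omega
  · omega
  · rw [gf_eq h1, gf_gt h2] at hv
    have := (ρ ⟨(j : ℕ) - (p + 1), by omega⟩).isLt; omega
  · rw [gf_gt h1, gf_lt h2] at hv; have := (σ ⟨j, h2⟩).isLt; omega
  · rw [gf_gt h1, gf_eq h2] at hv
    have := (ρ ⟨(i : ℕ) - (p + 1), by omega⟩).isLt; omega
  · rw [gf_gt h1, gf_gt h2] at hv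
    have h4 : (⟨(i : ℕ) - (p + 1), by omega⟩ : Fin (n - p)) = ⟨(j : ℕ) - (p + 1), by omega⟩ :=
      ρ.injective (Fin.ext (by omega))
    simp only [Fin.mk.injEq] at h4
    omega

lemma gf_surj : Function.Surjective (gf n p hp σ ρ) := by
  intro y
  have hy := y.isLt
  by_cases h1 : (y : ℕ) < p
  · refine ⟨⟨σ⁻¹ ⟨y, h1⟩, by have := (σ⁻¹ ⟨y, h1⟩).isLt; omega⟩, Fin.ext ?_⟩
    rw [gf_lt (show ((⟨(σ⁻¹ ⟨y, h1⟩ : Fin p), by have := (σ⁻¹ ⟨y, h1⟩).isLt; omega⟩ : Fin (n+1)) : ℕ) < p from (σ⁻¹ ⟨y, h1⟩).isLt)]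
    have : (⟨((⟨(σ⁻¹ ⟨y, h1⟩ : Fin p), by have := (σ⁻¹ ⟨y, h1⟩).isLt; omega⟩ : Fin (n+1)) : ℕ), (σ⁻¹ ⟨y, h1⟩).isLt⟩ : Fin p) = σ⁻¹ ⟨y, h1⟩ :=
      Fin.ext rfl
    rw [this, Perm.inv_def, Equiv.apply_symm_apply]
  · by_cases h2 : (y : ℕ) = n
    · exact ⟨⟨p, by omega⟩, Fin.ext (by
        rw [gf_eq (show ((⟨p, by omega⟩ : Fin (n+1)) : ℕ) = p from rfl)]; omega)⟩
    · have hyp : (y : ℕ) - p < n - p := by omega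
      refine ⟨⟨p + 1 + (ρ⁻¹ ⟨(y : ℕ) - p, hyp⟩ : ℕ), by have := (ρ⁻¹ ⟨(y : ℕ) - p, hyp⟩).isLt; omega⟩, Fin.ext ?_⟩
      rw [gf_gt (show p < p + 1 + (ρ⁻¹ ⟨(y : ℕ) - p, hyp⟩ : ℕ) by omega)]
      have : (⟨p + 1 + (ρ⁻¹ ⟨(y : ℕ) - p, hyp⟩ : ℕ) - (p + 1), by have := (ρ⁻¹ ⟨(y : ℕ) - p, hyp⟩).isLt; omega⟩ : Fin (n - p)) = ρ⁻¹ ⟨(y : ℕ) - p, hyp⟩ :=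
        Fin.ext (by simp)
      rw [this, Perm.inv_def, Equiv.apply_symm_apply]
      show p + ((y : ℕ) - p) = y
      omega

noncomputable def g (n p : ℕ) (hp : p ≤ n) (σ : Perm (Fin p)) (ρ : Perm (Fin (n - p))) :
    Perm (Fin (n + 1)) :=
  Equiv.ofBijective (gf n p hp σ ρ) ⟨gf_inj, gf_surj⟩

lemma gf_le (i : Fin (n + 1)) : (gf n p hp σ ρ i : ℕ) ≤ n := by
  have := (gf n p hp σ ρ i).isLt; omega

lemma g_av (hσ : Avoids231 σ) (hρ : Avoids231 ρ) : Avoids231 (g n p hp σ ρ) := by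
  rintro ⟨i, j, k, hij, hjk, h1, h2⟩
  have hij' : (i : ℕ) < j := hij
  have hjk' : (j : ℕ) < k := hjk
  have h1' : (gf n p hp σ ρ k : ℕ) < gf n p hp σ ρ i := h1
  have h2' : (gf n p hp σ ρ i : ℕ) < gf n p hp σ ρ j := h2
  have hi := i.isLt; have hj := j.isLt; have hk := k.isLt
  rcases lt_trichotomy (i : ℕ) p with hip | hip | hip
  · rcases lt_trichotomy (k : ℕ) p with hkp | hkp | hkp
    · have hjp : (j : ℕ) < p := by omega
      rw [gf_lt hip, gf_lt hkp] at h1'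
      rw [gf_lt hip, gf_lt hjp] at h2'
      exact hσ ⟨⟨i, hip⟩, ⟨j, hjp⟩, ⟨k, hkp⟩, hij', hjk', h1', h2'⟩
    · rw [gf_eq hkp] at h1'
      have := gf_le (hp := hp) (σ := σ) (ρ := ρ) i; omega
    · rw [gf_lt hip, gf_gt hkp] at h1'
      have := (σ ⟨i, hip⟩).isLt; omega
  · rw [gf_eq hip] at h2'
    have := gf_le (hp := hp) (σ := σ) (ρ := ρ) j; omega
  · have hjp : p < (j : ℕ) := by omega
    have hkp : p < (k : ℕ) := by omega
    rw [gf_gt hkp, gf_gt hip] at h1'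
    rw [gf_gt hip, gf_gt hjp] at h2'
    refine hρ ⟨⟨(i : ℕ) - (p + 1), by omega⟩, ⟨(j : ℕ) - (p + 1), by omega⟩,
      ⟨(k : ℕ) - (p + 1), by omega⟩, by show (i:ℕ) - (p+1) < (j:ℕ) - (p+1); omega,
      by show (j:ℕ) - (p+1) < (k:ℕ) - (p+1); omega, by omega, by omega⟩

end Glue

/-! ### Decomposition of an avoiding permutation at its maximum -/

section Decompose

variable {n : ℕ} (π : Perm (Fin (n + 1)))

/-- position of the maximum -/
def mp : ℕ := (π.symm (Fin.last n) : ℕ)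

lemma mp_lt : mp π < n + 1 := (π.symm (Fin.last n)).isLt

lemma mp_le : mp π ≤ n := by have := mp_lt π; omega

lemma mp_app : π ⟨mp π, mp_lt π⟩ = Fin.last n := by
  rw [show (⟨mp π, mp_lt π⟩ : Fin (n+1)) = π.symm (Fin.last n) from Fin.ext rfl]
  exact π.apply_symm_apply _

lemma val_lt_of_ne (i : Fin (n + 1)) (h : (i : ℕ) ≠ mp π) : (π i : ℕ) < n := by
  have h1 : (π i : ℕ) ≤ n := by have := (π i).isLt; omega
  rcases h1.lt_or_eq with h2 | h2
  · exact h2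
  · exfalso
    have : π i = Fin.last n := Fin.ext h2
    have : i = π.symm (Fin.last n) := by rw [← this, Equiv.symm_apply_apply]
    exact h (congrArg Fin.val this)

variable (hπ : Avoids231 π)
include hπ

lemma step1 (i k : Fin (n + 1)) (hi : (i : ℕ) < mp π) (hk : mp π < (k : ℕ)) :
    (π i : ℕ) < π k := by
  by_contra hcon
  have hne : (π k : ℕ) ≠ π i := fun h =>
    absurd (congrArg Fin.val (π.injective (Fin.ext h))) (by omega)
  have h1 : (π k : ℕ) < π i := by omega
  have h2 : (π i : ℕ) < n := val_lt_of_ne π i (by omega)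
  exact hπ ⟨i, ⟨mp π, mp_lt π⟩, k, hi, hk, h1, by
    show (π i : ℕ) < (π ⟨mp π, mp_lt π⟩ : ℕ)
    rw [mp_app]; exact h2⟩

omit hπ

lemma card_filter_lt_val (c : ℕ) (hc : c ≤ n + 1) :
    (univ.filter fun y : Fin (n + 1) => (y : ℕ) < c).card = c := by
  rcases Nat.lt_or_ge c (n + 1) with h | h
  · have : (univ.filter fun y : Fin (n + 1) => (y : ℕ) < c) = Iio ⟨c, h⟩ := by
      ext x; simp [Fin.lt_def]
    rw [this, Fin.card_Iio]
  · have hcn : c = n + 1 := by omega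
    subst hcn
    have : (univ.filter fun y : Fin (n + 1) => (y : ℕ) < n + 1) = univ := by
      ext x; simp [x.isLt]; exact Fin.is_le x
    rw [this, card_univ, Fintype.card_fin]

lemma card_filter_pi_lt (c : ℕ) (hc : c ≤ n + 1) :
    (univ.filter fun x : Fin (n + 1) => (π x : ℕ) < c).card = c := by
  have h := Finset.card_bij' (s := univ.filter fun x : Fin (n + 1) => (π x : ℕ) < c)
    (t := univ.filter fun y : Fin (n + 1) => (y : ℕ) < c) (fun x _ => π x) (fun y _ => π.symm y)
    ?_ ?_ ?_ ?_
  · rw [h, card_filter_lt_val c hc]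
  · intro a ha; simp only [mem_filter, mem_univ, true_and] at ha ⊢; exact ha
  · intro a ha; simp only [mem_filter, mem_univ, true_and] at ha ⊢
    rwa [π.apply_symm_apply]
  · intro a _; exact π.symm_apply_apply a
  · intro a _; exact π.apply_symm_apply a

include hπ

lemma step2 (i : Fin (n + 1)) (hi : (i : ℕ) < mp π) : (π i : ℕ) < mp π := by
  by_contra hcon
  set c : ℕ := (π i : ℕ) with hc
  have hcn : c ≤ n + 1 := by have := (π i).isLt; omega
  have hcard : (univ.filter fun x : Fin (n + 1) => (π x : ℕ) < c).card = c :=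
    card_filter_pi_lt π c hcn
  have hsub : (univ.filter fun x : Fin (n + 1) => (π x : ℕ) < c) ⊆
      (univ.filter fun x : Fin (n + 1) => (x : ℕ) < mp π).erase i := by
    intro x hx
    simp only [mem_filter, mem_univ, true_and] at hx
    rw [mem_erase]
    constructor
    · intro hxi; subst hxi; omega
    · simp only [mem_filter, mem_univ, true_and]
      by_contra hxP
      push_neg at hxP
      rcases hxP.lt_or_eq with h | h
      · exact absurd hx (by have := step1 π hπ i x hi h; omega)
      · have : π x = Fin.last n := by rw [show x = ⟨mp π, mp_lt π⟩ from Fin.ext h.symm]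
                                      exact mp_app π
        have : (π x : ℕ) = n := congrArg Fin.val this
        omega
  have hle := Finset.card_le_card hsub
  have hi_mem : i ∈ univ.filter fun x : Fin (n + 1) => (x : ℕ) < mp π := by
    simp only [mem_filter, mem_univ, true_and]; exact hi
  rw [Finset.card_erase_of_mem hi_mem, card_filter_lt_val (mp π) (by have := mp_le π; omega)] at hle
  omega

lemma step3 (i : Fin (n + 1)) (hi : (π i : ℕ) < mp π) : (i : ℕ) < mp π := by
  have himg : (univ.filter fun x : Fin (n + 1) => (x : ℕ) < mp π).image π =
      univ.filter fun y : Fin (n + 1) => (y : ℕ) < mp π := by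
    apply Finset.eq_of_subset_of_card_le
    · intro y hy
      simp only [Finset.mem_image, mem_filter, mem_univ, true_and] at hy ⊢
      obtain ⟨x, hx, rfl⟩ := hy
      exact step2 π hπ x hx
    · rw [Finset.card_image_of_injective _ π.injective]
  have : π i ∈ univ.filter fun y : Fin (n + 1) => (y : ℕ) < mp π := by
    simp only [mem_filter, mem_univ, true_and]; exact hi
  rw [← himg, Finset.mem_image] at this
  obtain ⟨x, hx, hxe⟩ := this
  simp only [mem_filter, mem_univ, true_and] at hx
  rwa [← π.injective hxe]

lemma step4 (i : Fin (n + 1)) (hi : mp π < (i : ℕ)) :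
    mp π ≤ (π i : ℕ) ∧ (π i : ℕ) < n := by
  constructor
  · by_contra h; push_neg at h
    have := step3 π hπ i h; omega
  · exact val_lt_of_ne π i (by omega)

omit hπ

lemma lt1 (a : Fin (mp π)) : (a : ℕ) < n + 1 := by
  have := a.isLt; have := mp_lt π; omega

lemma lt2 (a : Fin (n - mp π)) : mp π + 1 + (a : ℕ) < n + 1 := by
  have := a.isLt; have := mp_le π; omega

include hπ

/-- The first block of the decomposition, as a function. -/
def σf (a : Fin (mp π)) : Fin (mp π) :=
  ⟨(π ⟨a, lt1 π a⟩ : ℕ), step2 π hπ _ a.isLt⟩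

lemma σf_bij : Function.Bijective (σf π hπ) := by
  constructor
  · intro a b hab
    have hv0 := congrArg Fin.val hab
    have hv : (π ⟨a, lt1 π a⟩ : ℕ) = π ⟨b, lt1 π b⟩ := hv0
    have := π.injective (Fin.ext hv)
    simp only [Fin.mk.injEq] at this
    exact Fin.ext this
  · intro b
    have hb : (b : ℕ) < n + 1 := lt1 π b
    have hx : ((π.symm ⟨b, hb⟩ : Fin (n+1)) : ℕ) < mp π := by
      apply step3 π hπ
      rw [π.apply_symm_apply]
      exact b.isLt
    refine ⟨⟨(π.symm ⟨b, hb⟩ : Fin (n+1)), hx⟩, Fin.ext ?_⟩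
    show (π ⟨((π.symm ⟨b, hb⟩ : Fin (n+1)) : ℕ), _⟩ : ℕ) = b
    rw [show (⟨((π.symm ⟨b, hb⟩ : Fin (n+1)) : ℕ), lt1 π ⟨_, hx⟩⟩ : Fin (n+1)) = π.symm ⟨b, hb⟩
      from Fin.ext rfl, π.apply_symm_apply]

noncomputable def σd : Perm (Fin (mp π)) := Equiv.ofBijective (σf π hπ) (σf_bij π hπ)

lemma σd_av : Avoids231 (σd π hπ) := by
  rintro ⟨a, b, c, hab, hbc, h1, h2⟩
  have h1' : (π ⟨c, lt1 π c⟩ : ℕ) < π ⟨a, lt1 π a⟩ := h1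
  have h2' : (π ⟨a, lt1 π a⟩ : ℕ) < π ⟨b, lt1 π b⟩ := h2
  exact hπ ⟨⟨a, lt1 π a⟩, ⟨b, lt1 π b⟩, ⟨c, lt1 π c⟩, hab, hbc, h1', h2'⟩

/-- The second block of the decomposition, as a function. -/
def ρf (a : Fin (n - mp π)) : Fin (n - mp π) :=
  ⟨(π ⟨mp π + 1 + a, lt2 π a⟩ : ℕ) - mp π, by
    have h := step4 π hπ ⟨mp π + 1 + a, lt2 π a⟩ (by show mp π < mp π + 1 + (a : ℕ); omega)
    omega⟩

lemma ρf_bij : Function.Bijective (ρf π hπ) := by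
  constructor
  · intro a b hab
    have hv0 := congrArg Fin.val hab
    have hv : (π ⟨mp π + 1 + a, lt2 π a⟩ : ℕ) - mp π
        = (π ⟨mp π + 1 + b, lt2 π b⟩ : ℕ) - mp π := hv0
    have h4a := step4 π hπ ⟨mp π + 1 + a, lt2 π a⟩ (by show mp π < mp π + 1 + (a : ℕ); omega)
    have h4b := step4 π hπ ⟨mp π + 1 + b, lt2 π b⟩ (by show mp π < mp π + 1 + (b : ℕ); omega)
    have := π.injective (Fin.ext (show (π ⟨mp π + 1 + a, lt2 π a⟩ : ℕ)
      = π ⟨mp π + 1 + b, lt2 π b⟩ by omega))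
    simp only [Fin.mk.injEq] at this
    exact Fin.ext (by omega)
  · intro b
    have hb : mp π + (b : ℕ) < n + 1 := by have := b.isLt; have := mp_le π; omega
    set x : Fin (n + 1) := π.symm ⟨mp π + b, hb⟩ with hxdef
    have hπx : π x = ⟨mp π + b, hb⟩ := π.apply_symm_apply _
    have hx1 : ¬ ((x : ℕ) < mp π) := by
      intro h
      have := step2 π hπ x h
      rw [hπx] at this
      simp only at this
      omega
    have hx2 : (x : ℕ) ≠ mp π := by
      intro h
      have : π x = Fin.last n := by rw [show x = ⟨mp π, mp_lt π⟩ from Fin.ext h]; exact mp_app π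
      rw [hπx] at this
      have : mp π + (b : ℕ) = n := congrArg Fin.val this
      have := b.isLt; omega
    have hx3 : (x : ℕ) - (mp π + 1) < n - mp π := by have := x.isLt; omega
    refine ⟨⟨(x : ℕ) - (mp π + 1), hx3⟩, Fin.ext ?_⟩
    show (π ⟨mp π + 1 + ((x : ℕ) - (mp π + 1)), _⟩ : ℕ) - mp π = b
    rw [show (⟨mp π + 1 + ((x : ℕ) - (mp π + 1)), lt2 π ⟨_, hx3⟩⟩ : Fin (n+1)) = x
      from Fin.ext (by simp only; omega), hπx]
    simp only
    omega

noncomputable def ρd : Perm (Fin (n - mp π)) := Equiv.ofBijective (ρf π hπ) (ρf_bij π hπ)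

lemma ρd_av : Avoids231 (ρd π hπ) := by
  rintro ⟨a, b, c, hab, hbc, h1, h2⟩
  have hab' : (a : ℕ) < b := hab
  have hbc' : (b : ℕ) < c := hbc
  have h1' : (π ⟨mp π + 1 + c, lt2 π c⟩ : ℕ) - mp π
      < (π ⟨mp π + 1 + a, lt2 π a⟩ : ℕ) - mp π := h1
  have h2' : (π ⟨mp π + 1 + a, lt2 π a⟩ : ℕ) - mp π
      < (π ⟨mp π + 1 + b, lt2 π b⟩ : ℕ) - mp π := h2
  have h4a := step4 π hπ ⟨mp π + 1 + a, lt2 π a⟩ (by show mp π < mp π + 1 + (a : ℕ); omega)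
  have h4b := step4 π hπ ⟨mp π + 1 + b, lt2 π b⟩ (by show mp π < mp π + 1 + (b : ℕ); omega)
  have h4c := step4 π hπ ⟨mp π + 1 + c, lt2 π c⟩ (by show mp π < mp π + 1 + (c : ℕ); omega)
  refine hπ ⟨⟨mp π + 1 + a, lt2 π a⟩, ⟨mp π + 1 + b, lt2 π b⟩, ⟨mp π + 1 + c, lt2 π c⟩,
    by show mp π + 1 + (a : ℕ) < mp π + 1 + b; omega,
    by show mp π + 1 + (b : ℕ) < mp π + 1 + c; omega,
    by show (π ⟨mp π + 1 + c, lt2 π c⟩ : ℕ) < π ⟨mp π + 1 + a, lt2 π a⟩; omega,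
    by show (π ⟨mp π + 1 + a, lt2 π a⟩ : ℕ) < π ⟨mp π + 1 + b, lt2 π b⟩; omega⟩

lemma g_decomp : g n (mp π) (mp_le π) (σd π hπ) (ρd π hπ) = π := by
  apply Equiv.ext
  intro i
  apply Fin.ext
  show (gf n (mp π) (mp_le π) (σd π hπ) (ρd π hπ) i : ℕ) = π i
  rcases lt_trichotomy (i : ℕ) (mp π) with h | h | h
  · rw [gf_lt h]
    show (π ⟨(i : ℕ), lt1 π ⟨(i : ℕ), h⟩⟩ : ℕ) = π i
    rw [show (⟨(i : ℕ), lt1 π ⟨(i : ℕ), h⟩⟩ : Fin (n+1)) = i from Fin.ext rfl]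
  · rw [gf_eq h]
    rw [show i = ⟨mp π, mp_lt π⟩ from Fin.ext h, mp_app π]
    rfl
  · rw [gf_gt h]
    have hpf : (i : ℕ) - (mp π + 1) < n - mp π := by have := i.isLt; omega
    have h4 := step4 π hπ i h
    show mp π + ((π ⟨mp π + 1 + ((i : ℕ) - (mp π + 1)), lt2 π ⟨(i : ℕ) - (mp π + 1), hpf⟩⟩ : ℕ)
      - mp π) = π i
    rw [show (⟨mp π + 1 + ((i : ℕ) - (mp π + 1)), lt2 π ⟨(i : ℕ) - (mp π + 1), hpf⟩⟩ : Fin (n+1))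
      = i from Fin.ext (by simp only; omega)]
    omega

end Decompose

/-! ### Counting -/

section Count

attribute [local instance] Classical.propDecidable

/-- The type of 231-avoiding permutations of `Fin m`. -/
def Av (m : ℕ) := {π : Perm (Fin m) // Avoids231 π}

noncomputable instance (m : ℕ) : Fintype (Av m) := by unfold Av; infer_instance

/-- The decomposition bijection, as a map from triples to avoiders. -/
noncomputable def G (n : ℕ) : (Σ p : Fin (n + 1), Av (p : ℕ) × Av (n - (p : ℕ))) → Av (n + 1) :=
  fun x => ⟨g n x.1 (by have := x.1.isLt; omega) x.2.1.1 x.2.2.1, g_av x.2.1.2 x.2.2.2⟩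

lemma G_bij (n : ℕ) : Function.Bijective (G n) := by
  constructor
  · rintro ⟨p, ⟨σ, hσ⟩, ⟨ρ, hρ⟩⟩ ⟨q, ⟨σ', hσ'⟩, ⟨ρ', hρ'⟩⟩ h
    have hg : g n p (by have := p.isLt; omega) σ ρ = g n q (by have := q.isLt; omega) σ' ρ' :=
      congrArg Subtype.val h
    have happ : ∀ i : Fin (n + 1),
        (gf n p (by have := p.isLt; omega) σ ρ i : ℕ) =
          gf n q (by have := q.isLt; omega) σ' ρ' i :=
      fun i => congrArg Fin.val (congrFun (congrArg (fun e : Perm (Fin (n+1)) => (e : Fin (n+1) → Fin (n+1))) hg) i)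
    have hpq : (p : ℕ) = q := by
      by_contra hne
      have h1 := happ ⟨(p : ℕ), p.isLt⟩
      rw [gf_eq (show ((⟨(p : ℕ), p.isLt⟩ : Fin (n+1)) : ℕ) = p from rfl)] at h1
      rcases lt_trichotomy ((p : ℕ)) (q : ℕ) with hlt | heq | hgt
      · rw [gf_lt (show ((⟨(p : ℕ), p.isLt⟩ : Fin (n+1)) : ℕ) < q from hlt)] at h1
        have := (σ' ⟨(p : ℕ), hlt⟩).isLt
        have := q.isLt; omega
      · exact hne heq
      · rw [gf_gt (show (q : ℕ) < ((⟨(p : ℕ), p.isLt⟩ : Fin (n+1)) : ℕ) from hgt)] at h1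
        have := (ρ' ⟨(p : ℕ) - ((q : ℕ) + 1), by have := p.isLt; omega⟩).isLt
        have := q.isLt; omega
    have hPQ : p = q := Fin.ext hpq
    subst hPQ
    have hσσ : σ = σ' := by
      apply Equiv.ext
      intro a
      have ha : (a : ℕ) < (p : ℕ) := a.isLt
      have han : (a : ℕ) < n + 1 := by have := p.isLt; omega
      have h1 := happ ⟨(a : ℕ), han⟩
      rw [gf_lt (show ((⟨(a : ℕ), han⟩ : Fin (n+1)) : ℕ) < p from ha),
        gf_lt (show ((⟨(a : ℕ), han⟩ : Fin (n+1)) : ℕ) < p from ha)] at h1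
      have : (⟨(a : ℕ), ha⟩ : Fin (p : ℕ)) = a := Fin.ext rfl
      rw [this] at h1
      exact Fin.ext h1
    have hρρ : ρ = ρ' := by
      apply Equiv.ext
      intro a
      have ha := a.isLt
      have hq := p.isLt
      have han : (p : ℕ) + 1 + (a : ℕ) < n + 1 := by omega
      have h1 := happ ⟨(p : ℕ) + 1 + (a : ℕ), han⟩
      rw [gf_gt' (show (p : ℕ) < ((⟨(p : ℕ) + 1 + (a : ℕ), han⟩ : Fin (n+1)) : ℕ) by
            show (p : ℕ) < (p : ℕ) + 1 + (a : ℕ); omega) a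
          (by show (a : ℕ) = (p : ℕ) + 1 + (a : ℕ) - ((p : ℕ) + 1); omega),
        gf_gt' (show (p : ℕ) < ((⟨(p : ℕ) + 1 + (a : ℕ), han⟩ : Fin (n+1)) : ℕ) by
            show (p : ℕ) < (p : ℕ) + 1 + (a : ℕ); omega) a
          (by show (a : ℕ) = (p : ℕ) + 1 + (a : ℕ) - ((p : ℕ) + 1); omega)] at h1
      exact Fin.ext (by omega)
    subst hσσ; subst hρρ; rfl
  · rintro ⟨π, hπ⟩
    exact ⟨⟨⟨mp π, mp_lt π⟩, ⟨σd π hπ, σd_av π hπ⟩, ⟨ρd π hπ, ρd_av π hπ⟩⟩,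
      Subtype.ext (g_decomp π hπ)⟩

lemma card_av_succ (n : ℕ) :
    Nat.card (Av (n + 1)) =
      ∑ p : Fin (n + 1), Nat.card (Av (p : ℕ)) * Nat.card (Av (n - (p : ℕ))) := by
  rw [← Nat.card_eq_of_bijective (G n) (G_bij n), Nat.card_eq_fintype_card, Fintype.card_sigma]
  refine Finset.sum_congr rfl fun p _ => ?_
  rw [Fintype.card_prod, Nat.card_eq_fintype_card, Nat.card_eq_fintype_card]

lemma card_av : ∀ m : ℕ, Nat.card (Av m) = catalan m := by
  intro m
  induction m using Nat.strong_induction_on with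
  | _ m ih =>
    match m with
    | 0 =>
      haveI : Subsingleton (Av 0) := ⟨fun a b => Subtype.ext (Equiv.ext fun x => x.elim0)⟩
      haveI : Nonempty (Av 0) := ⟨⟨1, fun ⟨i, _⟩ => i.elim0⟩⟩
      rw [Nat.card_unique, catalan_zero]
    | m + 1 =>
      rw [card_av_succ, catalan_succ]
      exact Finset.sum_congr rfl fun p _ => by
        rw [ih p (by have := p.isLt; omega), ih (m - p) (by omega)]

end Count

/-! ### The mesh pattern characterization -/

section Mesh

variable {m : ℕ}

lemma extFun_zero (α : Fin 1 → Fin (m + 1)) : extFun α 0 = 0 := by simp [extFun]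

lemma extFun_one (α : Fin 1 → Fin (m + 1)) : extFun α 1 = (α 0 : ℕ) + 1 := by
  simp [extFun]

lemma extFun_two (α : Fin 1 → Fin (m + 1)) : extFun α 2 = m + 2 := by
  simp [extFun]

lemma contains_iff (π : Perm (Fin (m + 1))) :
    ContainsMesh (1 : Perm (Fin 1)) ({(0,0),(0,1),(1,1)} : Finset (ℕ × ℕ)) π ↔
      π 0 = Fin.last m := by
  constructor
  · rintro ⟨α, β, hα, hβ, hc, hr⟩
    have hπα : π (α 0) = β 0 := by simpa using hc 0
    have hπαv : (π (α 0) : ℕ) = β 0 := congrArg Fin.val hπα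
    have h00 := hr (0,0) (by simp)
    have h01 := hr (0,1) (by simp)
    have h11 := hr (1,1) (by simp)
    simp only [Prod.fst, Prod.snd, zero_add, one_add_one_eq_two] at h00 h01 h11
    simp only [extFun_zero, extFun_one, extFun_two] at h00 h01 h11
    have hz : ((0 : Fin (m + 1)) : ℕ) = 0 := rfl
    have hα0 : (α 0 : ℕ) = 0 := by
      by_contra h
      have hπ0 := (π 0).isLt
      rcases lt_trichotomy ((π 0 : ℕ)) ((β 0 : ℕ)) with hv | hv | hv
      · exact h00 0 ⟨by omega, by omega, by omega, by omega⟩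
      · have : π 0 = π (α 0) := Fin.ext (by omega)
        have := congrArg Fin.val (π.injective this)
        omega
      · exact h01 0 ⟨by omega, by omega, by omega, by omega⟩
    have hπ0v : (π 0 : ℕ) = β 0 := by
      rw [show (0 : Fin (m + 1)) = α 0 from Fin.ext hα0.symm, hπαv]
    have hmax : ∀ x : Fin (m + 1), (π x : ℕ) ≤ β 0 := by
      intro x
      by_contra h
      push_neg at h
      have hx0 : (x : ℕ) ≠ 0 := by
        intro hh
        have : x = α 0 := Fin.ext (by omega)
        rw [this] at h
        omega
      have hπx := (π x).isLt
      have hxlt := x.isLt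
      exact h11 x ⟨by omega, by omega, by omega, by omega⟩
    have hb : (β 0 : ℕ) = m := by
      have h1 := hmax (π.symm (Fin.last m))
      rw [π.apply_symm_apply] at h1
      have h2 := (β 0).isLt
      have h3 : ((Fin.last m) : ℕ) = m := rfl
      omega
    exact Fin.ext (by rw [show ((Fin.last m) : ℕ) = m from rfl]; omega)
  · intro h0
    have h0v : (π 0 : ℕ) = m := congrArg Fin.val h0
    refine ⟨fun _ => 0, fun _ => π 0, ?_, ?_, fun i => rfl, ?_⟩
    · intro a b hab
      exact absurd (Subsingleton.elim a b) (ne_of_lt hab)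
    · intro a b hab
      exact absurd (Subsingleton.elim a b) (ne_of_lt hab)
    · intro p hp x
      simp only [Finset.mem_insert, Finset.mem_singleton] at hp
      have hz : (((fun _ : Fin 1 => (0 : Fin (m + 1))) 0 : Fin (m + 1)) : ℕ) = 0 := rfl
      have hπx := (π x).isLt
      rcases hp with rfl | rfl | rfl <;> rintro ⟨c1, c2, c3, c4⟩ <;>
        simp only [Prod.fst, Prod.snd, zero_add, one_add_one_eq_two, extFun_zero, extFun_one,
          extFun_two, Fin.val_zero] at c1 c2 c3 c4
      · omega
      · omega
      · omega

end Mesh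

/-! ### Avoiders starting with the maximum -/

section Start

variable {m : ℕ} (π : Perm (Fin (m + 1)))

lemma lt3 (a : Fin m) : 1 + (a : ℕ) < m + 1 := by have := a.isLt; omega

variable (h0 : π 0 = Fin.last m)

/-- Stripping the initial maximum. -/
def ρs (a : Fin m) : Fin m :=
  ⟨(π ⟨1 + a, lt3 a⟩ : ℕ), by
    have h1 := (π ⟨1 + (a : ℕ), lt3 a⟩).isLt
    by_contra hge
    push_neg at hge
    have h2 : π ⟨1 + (a : ℕ), lt3 a⟩ = Fin.last m := Fin.ext (by
      show ((π ⟨1 + (a : ℕ), lt3 a⟩ : Fin (m+1)) : ℕ) = m; omega)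
    rw [← h0] at h2
    have h3 : 1 + (a : ℕ) = ((0 : Fin (m + 1)) : ℕ) := congrArg Fin.val (π.injective h2)
    have h4 : ((0 : Fin (m + 1)) : ℕ) = 0 := rfl
    omega⟩

lemma ρs_bij : Function.Bijective (ρs π h0) := by
  constructor
  · intro a b hab
    have hv0 := congrArg Fin.val hab
    have hv : (π ⟨1 + (a : ℕ), lt3 a⟩ : ℕ) = π ⟨1 + (b : ℕ), lt3 b⟩ := hv0
    have := π.injective (Fin.ext hv)
    simp only [Fin.mk.injEq] at this
    exact Fin.ext (by omega)
  · intro b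
    have hb : (b : ℕ) < m + 1 := by have := b.isLt; omega
    set x : Fin (m + 1) := π.symm ⟨b, hb⟩ with hxdef
    have hπx : π x = ⟨b, hb⟩ := π.apply_symm_apply _
    have hx0 : (x : ℕ) ≠ 0 := by
      intro hh
      have : x = 0 := Fin.ext hh
      rw [this, h0] at hπx
      have h5 := congrArg Fin.val hπx
      have h6 : ((Fin.last m) : ℕ) = (b : ℕ) := h5
      have h7 : ((Fin.last m) : ℕ) = m := rfl
      have := b.isLt
      omega
    have hx3 : (x : ℕ) - 1 < m := by have := x.isLt; omega
    refine ⟨⟨(x : ℕ) - 1, hx3⟩, Fin.ext ?_⟩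
    show (π ⟨1 + ((x : ℕ) - 1), lt3 ⟨(x : ℕ) - 1, hx3⟩⟩ : ℕ) = b
    rw [show (⟨1 + ((x : ℕ) - 1), lt3 ⟨(x : ℕ) - 1, hx3⟩⟩ : Fin (m + 1)) = x
      from Fin.ext (by show 1 + ((x : ℕ) - 1) = x; omega), hπx]

/-- Stripping the initial maximum, as a permutation. -/
noncomputable def ρt : Perm (Fin m) := Equiv.ofBijective (ρs π h0) (ρs_bij π h0)

variable (hπ : Avoids231 π)
include hπ

lemma ρt_av : Avoids231 (ρt π h0) := by
  rintro ⟨a, b, c, hab, hbc, h1, h2⟩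
  have hab' : (a : ℕ) < b := hab
  have hbc' : (b : ℕ) < c := hbc
  have h1' : (π ⟨1 + (c : ℕ), lt3 c⟩ : ℕ) < π ⟨1 + (a : ℕ), lt3 a⟩ := h1
  have h2' : (π ⟨1 + (a : ℕ), lt3 a⟩ : ℕ) < π ⟨1 + (b : ℕ), lt3 b⟩ := h2
  exact hπ ⟨⟨1 + (a : ℕ), lt3 a⟩, ⟨1 + (b : ℕ), lt3 b⟩, ⟨1 + (c : ℕ), lt3 c⟩,
    by show 1 + (a : ℕ) < 1 + (b : ℕ); omega,
    by show 1 + (b : ℕ) < 1 + (c : ℕ); omega, h1', h2'⟩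

omit hπ

lemma g_start : g m 0 (Nat.zero_le m) 1 (ρt π h0) = π := by
  apply Equiv.ext
  intro i
  apply Fin.ext
  show (gf m 0 (Nat.zero_le m) 1 (ρt π h0) i : ℕ) = π i
  rcases Nat.eq_zero_or_pos (i : ℕ) with h | h
  · rw [gf_eq h]
    rw [show i = 0 from Fin.ext h, h0]
    rfl
  · have hx3 : (i : ℕ) - 1 < m := by have := i.isLt; omega
    rw [gf_gt' h ⟨(i : ℕ) - 1, hx3⟩ (by show (i : ℕ) - 1 = (i : ℕ) - (0 + 1); omega)]
    show 0 + (π ⟨1 + ((i : ℕ) - 1), lt3 ⟨(i : ℕ) - 1, hx3⟩⟩ : ℕ) = π i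
    rw [show (⟨1 + ((i : ℕ) - 1), lt3 ⟨(i : ℕ) - 1, hx3⟩⟩ : Fin (m + 1)) = i
      from Fin.ext (by show 1 + ((i : ℕ) - 1) = i; omega)]
    omega

/-- Avoiders of length `m+1` starting with the maximum biject with avoiders of
length `m`. -/
noncomputable def Hmap : Av m → {π : Perm (Fin (m + 1)) // Avoids231 π ∧ π 0 = Fin.last m} :=
  fun ρ => ⟨g m 0 (Nat.zero_le m) 1 ρ.1,
    g_av (fun ⟨i, _⟩ => i.elim0) ρ.2,
    Fin.ext (gf_eq rfl)⟩

lemma Hmap_bij : Function.Bijective (Hmap (m := m)) := by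
  constructor
  · rintro ⟨ρ, hρ⟩ ⟨ρ', hρ'⟩ h
    have hg : g m 0 (Nat.zero_le m) 1 ρ = g m 0 (Nat.zero_le m) 1 ρ' :=
      congrArg Subtype.val h
    apply Subtype.ext
    apply Equiv.ext
    intro a
    have han : 1 + (a : ℕ) < m + 1 := lt3 a
    have h0' := congrArg Fin.val (congrFun (congrArg
      (fun e : Perm (Fin (m+1)) => (e : Fin (m+1) → Fin (m+1))) hg) ⟨1 + (a : ℕ), han⟩)
    have h1 : (gf m 0 (Nat.zero_le m) 1 ρ ⟨1 + (a : ℕ), han⟩ : ℕ)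
        = gf m 0 (Nat.zero_le m) 1 ρ' ⟨1 + (a : ℕ), han⟩ := h0'
    have hgt : (0 : ℕ) < ((⟨1 + (a : ℕ), han⟩ : Fin (m+1)) : ℕ) := by
      show 0 < 1 + (a : ℕ); omega
    rw [gf_gt' hgt a (by show (a : ℕ) = 1 + (a : ℕ) - (0 + 1); omega),
      gf_gt' hgt a (by show (a : ℕ) = 1 + (a : ℕ) - (0 + 1); omega)] at h1
    show ρ a = ρ' a
    exact Fin.ext (by omega)
  · rintro ⟨π, hπ, h0⟩
    exact ⟨⟨ρt π h0, ρt_av π h0 hπ⟩, Subtype.ext (g_start π h0)⟩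

end Start

end Av231

/-- The number of permutations of length `n ≥ 1` avoiding 231 and the mesh
pattern `(1, {⟨0,0⟩,⟨0,1⟩,⟨1,1⟩})` is `C_n - C_{n-1}`. -/
theorem card_av231_mesh_not_start_max (n : ℕ) (hn : 1 ≤ n) :
    Nat.card {π : Equiv.Perm (Fin n) // Avoids231 π ∧
        AvoidsMesh (1 : Equiv.Perm (Fin 1)) ({(0,0),(0,1),(1,1)} : Finset (ℕ × ℕ)) π} =
      catalan n - catalan (n - 1) := by
  obtain ⟨m, rfl⟩ : ∃ m, n = m + 1 := ⟨n - 1, by omega⟩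
  have hmesh : ∀ π : Equiv.Perm (Fin (m + 1)),
      (Avoids231 π ∧
        AvoidsMesh (1 : Equiv.Perm (Fin 1)) ({(0,0),(0,1),(1,1)} : Finset (ℕ × ℕ)) π) ↔
      (Avoids231 π ∧ ¬ π 0 = Fin.last m) :=
    fun π => and_congr_right fun _ => not_congr (Av231.contains_iff π)
  rw [Nat.card_congr (Equiv.subtypeEquivRight hmesh)]
  classical
  have hsplit : Nat.card (Av231.Av (m + 1)) =
      Nat.card {π : Equiv.Perm (Fin (m + 1)) // Avoids231 π ∧ π 0 = Fin.last m} +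
      Nat.card {π : Equiv.Perm (Fin (m + 1)) // Avoids231 π ∧ ¬ π 0 = Fin.last m} := by
    rw [Nat.card_congr
      ((Equiv.sumCompl (fun x : Av231.Av (m + 1) => x.1 0 = Fin.last m)).symm),
      Nat.card_sum]
    congr 1
    · exact Nat.card_congr (Equiv.subtypeSubtypeEquivSubtypeInter
        (fun π : Equiv.Perm (Fin (m + 1)) => Avoids231 π) (fun π => π 0 = Fin.last m))
    · exact Nat.card_congr (Equiv.subtypeSubtypeEquivSubtypeInter
        (fun π : Equiv.Perm (Fin (m + 1)) => Avoids231 π) (fun π => ¬ π 0 = Fin.last m))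
  have hstart : Nat.card {π : Equiv.Perm (Fin (m + 1)) // Avoids231 π ∧ π 0 = Fin.last m} =
      catalan m := by
    rw [← Nat.card_eq_of_bijective _ (Av231.Hmap_bij (m := m))]
    exact Av231.card_av m
  have htot := Av231.card_av (m + 1)
  rw [htot] at hsplit
  rw [hstart] at hsplit
  have hle : catalan m ≤ catalan (m + 1) := by
    rw [catalan_succ]
    have : catalan m = catalan ((0 : Fin (m + 1)) : ℕ) * catalan (m - ((0 : Fin (m + 1)) : ℕ)) := by
      norm_num
    rw [this]
    exact Finset.single_le_sum (f := fun i : Fin (m + 1) => catalan (i : ℕ) * catalan (m - (i : ℕ)))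
      (fun i _ => Nat.zero_le _) (Finset.mem_univ 0)
  simp only [Nat.add_sub_cancel]
  omega
end

section
/- Let m₁ = (12, {⟨0,1⟩,⟨0,2⟩,⟨2,0⟩,⟨2,1⟩}) and m₂ = (12, {⟨0,1⟩,⟨0,2⟩,⟨1,1⟩,⟨2,0⟩,⟨2,1⟩}). A permutation avoiding 321 avoids m₁ if and only if it avoids m₂. -/
/-- `π` avoids the classical pattern 321. -/
def Avoids321 {n : ℕ} (π : Equiv.Perm (Fin n)) : Prop :=
  ¬ ∃ i j k : Fin n, i < j ∧ j < k ∧ π j < π i ∧ π k < π j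

/-! ### Auxiliary definitions for the proof -/

section Aux

variable {n : ℕ} (π : Equiv.Perm (Fin n))

/-- Concrete description of an occurrence of the smaller mesh pattern. -/
def Occ1 (a b : Fin n) : Prop :=
  a < b ∧ π a < π b ∧
    (∀ x : Fin n, x < a → π a < π x → π x < π b → False) ∧
    (∀ x : Fin n, x < a → π b < π x → False) ∧
    (∀ x : Fin n, b < x → π x < π a → False) ∧
    (∀ x : Fin n, b < x → π a < π x → π x < π b → False)

/-- The middle-box emptiness condition. -/
def B11 (a b : Fin n) : Prop :=
  ∀ x : Fin n, a < x → x < b → π a < π x → π x < π b → False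

/-- The middle box as a finset. -/
def Mid (a b : Fin n) : Finset (Fin n) :=
  Finset.univ.filter (fun x => a < x ∧ x < b ∧ π a < π x ∧ π x < π b)

lemma mem_Mid {a b x : Fin n} :
    x ∈ Mid π a b ↔ a < x ∧ x < b ∧ π a < π x ∧ π x < π b := by
  simp [Mid]

/-- Translate a mesh occurrence (for either pattern) into concrete box facts. -/
lemma occ_concrete {R : Finset (ℕ × ℕ)} {α β : Fin 2 → Fin n}
    (h : MeshOcc (1 : Equiv.Perm (Fin 2)) R π α β)
    (h01 : (0,1) ∈ R) (h02 : (0,2) ∈ R) (h20 : (2,0) ∈ R) (h21 : (2,1) ∈ R) :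
    Occ1 π (α 0) (α 1) := by
  obtain ⟨hα, hβ, hval, hbox⟩ := h
  have hv0 : π (α 0) = β 0 := by have := hval 0; simpa using this
  have hv1 : π (α 1) = β 1 := by have := hval 1; simpa using this
  refine ⟨hα (by decide), ?_, ?_, ?_, ?_, ?_⟩
  · rw [hv0, hv1]; exact hβ (by decide)
  · intro x hx h1 h2
    refine hbox (0,1) h01 x ⟨show (0:ℕ) < (x:ℕ) + 1 by omega, ?_, ?_, ?_⟩
    · show (x : ℕ) + 1 < (α 0 : ℕ) + 1; omega
    · show ((β 0 : ℕ)) + 1 < (π x : ℕ) + 1; rw [← hv0]; omega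
    · show ((π x : ℕ)) + 1 < (β 1 : ℕ) + 1; rw [← hv1]; omega
  · intro x hx h1
    refine hbox (0,2) h02 x ⟨show (0:ℕ) < (x:ℕ) + 1 by omega, ?_, ?_, ?_⟩
    · show (x : ℕ) + 1 < (α 0 : ℕ) + 1; omega
    · show ((β 1 : ℕ)) + 1 < (π x : ℕ) + 1; rw [← hv1]; omega
    · show ((π x : ℕ)) + 1 < n + 1; have := (π x).isLt; omega
  · intro x hx h1
    refine hbox (2,0) h20 x ⟨?_, ?_, show (0:ℕ) < ((π x:Fin n):ℕ) + 1 by omega, ?_⟩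
    · show (α 1 : ℕ) + 1 < (x : ℕ) + 1; omega
    · show (x : ℕ) + 1 < n + 1; have := x.isLt; omega
    · show ((π x : ℕ)) + 1 < (β 0 : ℕ) + 1; rw [← hv0]; omega
  · intro x hx h1 h2
    refine hbox (2,1) h21 x ⟨?_, ?_, ?_, ?_⟩
    · show (α 1 : ℕ) + 1 < (x : ℕ) + 1; omega
    · show (x : ℕ) + 1 < n + 1; have := x.isLt; omega
    · show ((β 0 : ℕ)) + 1 < (π x : ℕ) + 1; rw [← hv0]; omega
    · show ((π x : ℕ)) + 1 < (β 1 : ℕ) + 1; rw [← hv1]; omega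

lemma occ_concrete_mid {R : Finset (ℕ × ℕ)} {α β : Fin 2 → Fin n}
    (h : MeshOcc (1 : Equiv.Perm (Fin 2)) R π α β) (h11 : (1,1) ∈ R) :
    B11 π (α 0) (α 1) := by
  obtain ⟨hα, hβ, hval, hbox⟩ := h
  have hv0 : π (α 0) = β 0 := by have := hval 0; simpa using this
  have hv1 : π (α 1) = β 1 := by have := hval 1; simpa using this
  intro x hx1 hx2 h1 h2
  refine hbox (1,1) h11 x ⟨?_, ?_, ?_, ?_⟩
  · show (α 0 : ℕ) + 1 < (x : ℕ) + 1; omega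
  · show (x : ℕ) + 1 < (α 1 : ℕ) + 1; omega
  · show ((β 0 : ℕ)) + 1 < (π x : ℕ) + 1; rw [← hv0]; omega
  · show ((π x : ℕ)) + 1 < (β 1 : ℕ) + 1; rw [← hv1]; omega

/-- Build a mesh occurrence from concrete box facts; the boxes required by `R`
must be among the five we control. -/
lemma mesh_of_concrete {R : Finset (ℕ × ℕ)} {a b : Fin n}
    (hR : R ⊆ ({(0,1),(0,2),(1,1),(2,0),(2,1)} : Finset (ℕ × ℕ)))
    (h1 : Occ1 π a b) (h2 : (1,1) ∈ R → B11 π a b) :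
    MeshOcc (1 : Equiv.Perm (Fin 2)) R π ![a, b] ![π a, π b] := by
  obtain ⟨hab, hv, h01, h02, h20, h21⟩ := h1
  refine ⟨?_, ?_, ?_, ?_⟩
  · intro i j hij; fin_cases i <;> fin_cases j <;> simp_all
  · intro i j hij; fin_cases i <;> fin_cases j <;> simp_all
  · intro i; fin_cases i <;> simp
  · intro p hp x
    have hp5 := hR hp
    simp only [Finset.mem_insert, Finset.mem_singleton] at hp5
    rcases hp5 with h | h | h | h | h <;> subst h <;> rintro ⟨c1, c2, c3, c4⟩
    · exact h01 x (by exact_mod_cast Nat.lt_of_succ_lt_succ c2)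
        (by exact_mod_cast Nat.lt_of_succ_lt_succ c3)
        (by exact_mod_cast Nat.lt_of_succ_lt_succ c4)
    · exact h02 x (by exact_mod_cast Nat.lt_of_succ_lt_succ c2)
        (by exact_mod_cast Nat.lt_of_succ_lt_succ c3)
    · exact h2 hp x (by exact_mod_cast Nat.lt_of_succ_lt_succ c1)
        (by exact_mod_cast Nat.lt_of_succ_lt_succ c2)
        (by exact_mod_cast Nat.lt_of_succ_lt_succ c3)
        (by exact_mod_cast Nat.lt_of_succ_lt_succ c4)
    · exact h20 x (by exact_mod_cast Nat.lt_of_succ_lt_succ c1)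
        (by exact_mod_cast Nat.lt_of_succ_lt_succ c4)
    · exact h21 x (by exact_mod_cast Nat.lt_of_succ_lt_succ c1)
        (by exact_mod_cast Nat.lt_of_succ_lt_succ c3)
        (by exact_mod_cast Nat.lt_of_succ_lt_succ c4)

/-- The combinatorial heart: a 321-avoiding permutation containing the small
occurrence contains one with empty middle box.  Induction on the size of the
middle box. -/
lemma key (h321 : Avoids321 π) :
    ∀ m : ℕ, ∀ a b : Fin n, Occ1 π a b → (Mid π a b).card ≤ m →
      ∃ a' b' : Fin n, Occ1 π a' b' ∧ B11 π a' b' := by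
  intro m
  induction m with
  | zero =>
    intro a b hocc hcard
    refine ⟨a, b, hocc, fun x h1 h2 h3 h4 => ?_⟩
    have : x ∈ Mid π a b := (mem_Mid π).2 ⟨h1, h2, h3, h4⟩
    have := Finset.card_pos.2 ⟨x, this⟩
    omega
  | succ m ih =>
    intro a b hocc hcard
    obtain ⟨hab, hv, h01, h02, h20, h21⟩ := hocc
    by_cases hMe : Mid π a b = ∅
    · refine ⟨a, b, ⟨hab, hv, h01, h02, h20, h21⟩, fun x h1 h2 h3 h4 => ?_⟩
      have : x ∈ Mid π a b := (mem_Mid π).2 ⟨h1, h2, h3, h4⟩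
      simp [hMe] at this
    · obtain ⟨x, hxM, hxmax⟩ := Finset.exists_max_image (Mid π a b) (fun z => π z)
        (Finset.nonempty_of_ne_empty hMe)
      obtain ⟨hax, hxb, hvax, hvxb⟩ := (mem_Mid π).1 hxM
      by_cases hy : ∃ y : Fin n, a < y ∧ y < x ∧ π b < π y
      · -- use the pair (a, x); any bad point to the right of x makes a 321 with y
        obtain ⟨y, hay, hyx, hby⟩ := hy
        have htri : ∀ z : Fin n, x < z → π z < π x → False := fun z hxz hzx =>
          h321 ⟨y, x, z, hyx, hxz, lt_trans hvxb hby, hzx⟩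
        have hocc' : Occ1 π a x := by
          refine ⟨hax, hvax, ?_, ?_, ?_, ?_⟩
          · intro z hza hz1 hz2
            exact h01 z hza hz1 (lt_trans hz2 hvxb)
          · intro z hza hz1
            rcases lt_trichotomy (π z) (π b) with h | h | h
            · exact h01 z hza (lt_trans hvax hz1) h
            · have : z = b := π.injective h
              subst this; exact absurd hab (not_lt.2 (le_of_lt hza))
            · exact h02 z hza h
          · intro z hxz hz1
            rcases lt_trichotomy z b with h | h | h
            · exact htri z hxz (lt_trans hz1 hvax)
            · subst h; exact absurd hv (not_lt.2 (le_of_lt hz1))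
            · exact h20 z h hz1
          · intro z hxz hz1 hz2
            rcases lt_trichotomy z b with h | h | h
            · exact htri z hxz hz2
            · subst h; exact absurd hz2 (lt_asymm hvxb)
            · exact h21 z h hz1 (lt_trans hz2 hvxb)
        have hsub : Mid π a x ⊆ (Mid π a b).erase x := by
          intro z hz
          obtain ⟨hz1, hz2, hz3, hz4⟩ := (mem_Mid π).1 hz
          exact Finset.mem_erase.2 ⟨ne_of_lt hz2,
            (mem_Mid π).2 ⟨hz1, lt_trans hz2 hxb, hz3, lt_trans hz4 hvxb⟩⟩
        have hlt : (Mid π a x).card ≤ m := by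
          have h1 := Finset.card_le_card hsub
          have h2 := Finset.card_erase_of_mem hxM
          have h3 := Finset.card_pos.2 ⟨x, hxM⟩
          omega
        exact ih a x hocc' hlt
      · -- use the pair (x, b); its middle box is empty by maximality of π x
        push_neg at hy
        refine ⟨x, b, ⟨hxb, hvxb, ?_, ?_, ?_, ?_⟩, ?_⟩
        · intro z hzx hz1 hz2
          rcases lt_trichotomy z a with h | h | h
          · exact h01 z h (lt_trans hvax hz1) hz2
          · subst h; exact absurd hz1 (lt_asymm hvax)
          · have : z ∈ Mid π a b := (mem_Mid π).2
              ⟨h, lt_trans hzx hxb, lt_trans hvax hz1, hz2⟩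
            exact absurd (hxmax z this) (not_le.2 hz1)
        · intro z hzx hz1
          rcases lt_trichotomy z a with h | h | h
          · exact h02 z h hz1
          · subst h; exact absurd hz1 (lt_asymm hv)
          · exact absurd hz1 (not_lt.2 (hy z h hzx))
        · intro z hbz hz1
          rcases lt_trichotomy (π z) (π a) with h | h | h
          · exact h20 z hbz h
          · have : z = a := π.injective h
            subst this; exact absurd (lt_trans hab hbz) (lt_irrefl _)
          · exact h21 z hbz h (lt_trans hz1 hvxb)
        · intro z hbz hz1 hz2
          exact h21 z hbz (lt_trans hvax hz1) hz2
        · intro z hxz hzb hz1 hz2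
          have : z ∈ Mid π a b := (mem_Mid π).2
            ⟨lt_trans hax hxz, hzb, lt_trans hvax hz1, hz2⟩
          exact absurd (hxmax z this) (not_le.2 hz1)

end Aux

/-- Under the dominating pattern 321, the mesh patterns
`(12, {⟨0,1⟩,⟨0,2⟩,⟨2,0⟩,⟨2,1⟩})` and
`(12, {⟨0,1⟩,⟨0,2⟩,⟨1,1⟩,⟨2,0⟩,⟨2,1⟩})` are coincident. -/
theorem coincidence_321_12_patterns' {n : ℕ} (π : Equiv.Perm (Fin n))
    (h : Avoids321 π) :
    AvoidsMesh (1 : Equiv.Perm (Fin 2))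
        ({(0,1),(0,2),(2,0),(2,1)} : Finset (ℕ × ℕ)) π ↔
      AvoidsMesh (1 : Equiv.Perm (Fin 2))
        ({(0,1),(0,2),(1,1),(2,0),(2,1)} : Finset (ℕ × ℕ)) π := by
  unfold AvoidsMesh
  constructor
  · intro h1 h2
    apply h1
    obtain ⟨α, β, hm⟩ := h2
    have hocc := occ_concrete π hm (by decide) (by decide) (by decide) (by decide)
    exact ⟨_, _, mesh_of_concrete π (by decide) hocc (by intro hmem; exact absurd hmem (by decide))⟩
  · intro h2 h1
    apply h2
    obtain ⟨α, β, hm⟩ := h1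
    have hocc := occ_concrete π hm (by decide) (by decide) (by decide) (by decide)
    obtain ⟨a', b', hocc', hB⟩ :=
      key π h ((Mid π (α 0) (α 1)).card) (α 0) (α 1) hocc le_rfl
    exact ⟨_, _, mesh_of_concrete π (by decide) hocc' (fun _ => hB)⟩
end
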